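/- Let 1/2 ≤ p < 1 and q = 1 - p. Then for λ ≥ 0, λ² p^λ (ln p)² - 2λ p^λ ln p + 2p^λ ≥ λ² q^λ (ln q)² - 2λ q^λ ln q + 2q^λ, and the reverse inequality holds for λ ≤ 0. -/

import Mathlib

/-- The function `u ↦ e^u (u² - 2u + 2)` is monotone, since its derivative is
`e^u u² ≥ 0`. -/
lemma tukey_aux_mono : Monotone (fun u : ℝ => Real.exp u * (u ^ 2 - 2 * u + 2)) := by
  apply monotone_of_deriv_nonneg
  · exact (Real.differentiable_exp.mul (by fun_prop))
  · intro u
    have h : HasDerivAt (fun u : ℝ => Real.exp u * (u ^ 2 - 2 * u + 2))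
        (Real.exp u * u ^ 2) u := by
      have h2 : HasDerivAt (fun u : ℝ => u ^ 2 - 2 * u + 2) (2 * u - 2) u := by
        have := ((hasDerivAt_pow 2 u).sub ((hasDerivAt_id u).const_mul 2)).add_const 2
        simpa [mul_comm] using this
      have : HasDerivAt (fun u : ℝ => Real.exp u * (u ^ 2 - 2 * u + 2)) _ u :=
        (Real.hasDerivAt_exp u).mul h2
      convert this using 1
      ring
    rw [h.deriv]
    positivity

/-- Convexity inequality for the Tukey Lambda quantile function: with
`1/2 ≤ p < 1`, `q = 1 - p`, for `λ ≥ 0` one has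
`λ²p^λ(ln p)² − 2λp^λ ln p + 2p^λ ≥ λ²q^λ(ln q)² − 2λq^λ ln q + 2q^λ`,
and the reverse inequality holds for `λ ≤ 0`. -/
theorem tukey_convexity_ineq (p q lam : ℝ) (hp : 1 / 2 ≤ p) (hp1 : p < 1)
    (hq : q = 1 - p) :
    (0 ≤ lam →
      lam ^ 2 * q ^ lam * Real.log q ^ 2 - 2 * lam * q ^ lam * Real.log q + 2 * q ^ lam ≤
      lam ^ 2 * p ^ lam * Real.log p ^ 2 - 2 * lam * p ^ lam * Real.log p + 2 * p ^ lam) ∧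
    (lam ≤ 0 →
      lam ^ 2 * p ^ lam * Real.log p ^ 2 - 2 * lam * p ^ lam * Real.log p + 2 * p ^ lam ≤
      lam ^ 2 * q ^ lam * Real.log q ^ 2 - 2 * lam * q ^ lam * Real.log q + 2 * q ^ lam) := by
  have hq0 : 0 < q := by rw [hq]; linarith
  have hp0 : 0 < p := by linarith
  have hqp : q ≤ p := by rw [hq]; linarith
  have hlq : Real.log q ≤ Real.log p := Real.log_le_log hq0 hqp
  have eqq : q ^ lam = Real.exp (lam * Real.log q) := by
    rw [Real.rpow_def_of_pos hq0, mul_comm]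
  have eqp : p ^ lam = Real.exp (lam * Real.log p) := by
    rw [Real.rpow_def_of_pos hp0, mul_comm]
  have key : ∀ x : ℝ, 0 < x →
      lam ^ 2 * x ^ lam * Real.log x ^ 2 - 2 * lam * x ^ lam * Real.log x + 2 * x ^ lam =
      Real.exp (lam * Real.log x) *
        ((lam * Real.log x) ^ 2 - 2 * (lam * Real.log x) + 2) := by
    intro x hx
    rw [Real.rpow_def_of_pos hx, mul_comm (Real.log x) lam]
    ring
  constructor
  · intro hl
    rw [key q hq0, key p hp0]
    exact tukey_aux_mono (mul_le_mul_of_nonneg_left hlq hl)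
  · intro hl
    rw [key q hq0, key p hp0]
    exact tukey_aux_mono (mul_le_mul_of_nonpos_left hlq hl)
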